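/- Inhomogeneous subadditivity: for any bipartite density operator ρ_AB on ℂ^{d_A} ⊗ ℂ^{d_B} with marginals ρ_A = Tr_B(ρ_AB) and ρ_B = Tr_A(ρ_AB), S_L(ρ_AB) ≤ (1/d_B)·S_L(ρ_A) + (1/d_A)·S_L(ρ_B) + (d_A−1)(d_B−1)/(d_A d_B). -/

import Mathlib

open Matrix
open scoped ComplexOrder Kronecker

/-- The linear entropy `S_L(ρ) = 1 - Tr(ρ²)`. -/
noncomputable def linEntropy {n : Type*} [Fintype n] (ρ : Matrix n n ℂ) : ℝ :=
  1 - ((ρ * ρ).trace).re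

/-- Partial trace over the second factor. -/
noncomputable def ptraceB {dA dB : ℕ} (ρ : Matrix (Fin dA × Fin dB) (Fin dA × Fin dB) ℂ) :
    Matrix (Fin dA) (Fin dA) ℂ := fun i j => ∑ k, ρ (i, k) (j, k)

/-- Partial trace over the first factor. -/
noncomputable def ptraceA {dA dB : ℕ} (ρ : Matrix (Fin dA × Fin dB) (Fin dA × Fin dB) ℂ) :
    Matrix (Fin dB) (Fin dB) ℂ := fun i j => ∑ k, ρ (k, i) (k, j)

section aux

variable {dA dB : ℕ} (ρ : Matrix (Fin dA × Fin dB) (Fin dA × Fin dB) ℂ)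

lemma trace_mul_kron_one (M : Matrix (Fin dA) (Fin dA) ℂ) :
    (ρ * (M ⊗ₖ (1 : Matrix (Fin dB) (Fin dB) ℂ))).trace = (ptraceB ρ * M).trace := by
  simp only [Matrix.trace, Matrix.diag, Matrix.mul_apply, ptraceB, kroneckerMap_apply,
    one_apply, Fintype.sum_prod_type, Finset.sum_mul, mul_ite, mul_one, mul_zero,
    Finset.sum_ite_eq, Finset.sum_ite_eq', Finset.mem_univ, if_true]
  exact Finset.sum_congr rfl fun i1 _ => Finset.sum_comm

lemma trace_one_kron_mul (N : Matrix (Fin dB) (Fin dB) ℂ) :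
    (ρ * ((1 : Matrix (Fin dA) (Fin dA) ℂ) ⊗ₖ N)).trace = (ptraceA ρ * N).trace := by
  simp only [Matrix.trace, Matrix.diag, Matrix.mul_apply, ptraceA, kroneckerMap_apply,
    one_apply, Fintype.sum_prod_type, Finset.sum_mul, ite_mul, zero_mul, one_mul]
  trans (∑ i1 : Fin dA, ∑ i2 : Fin dB, ∑ j2 : Fin dB, ρ (i1,i2) (i1,j2) * N j2 i2)
  · refine Finset.sum_congr rfl fun i1 _ => Finset.sum_congr rfl fun i2 _ => ?_
    rw [Finset.sum_comm]
    simp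
  · rw [Finset.sum_comm]
    exact Finset.sum_congr rfl fun i2 _ => Finset.sum_comm

lemma trace_ptraceB : (ptraceB ρ).trace = ρ.trace := by
  simp [Matrix.trace, Matrix.diag, ptraceB, Fintype.sum_prod_type]

lemma trace_ptraceA : (ptraceA ρ).trace = ρ.trace := by
  rw [Matrix.trace, Matrix.trace, Fintype.sum_prod_type]
  rw [Finset.sum_comm]
  rfl

lemma kron_conjTranspose {m n : Type*} [Fintype m] [Fintype n] [DecidableEq m] [DecidableEq n]
    (A : Matrix m m ℂ) (B : Matrix n n ℂ) : (A ⊗ₖ B)ᴴ = Aᴴ ⊗ₖ Bᴴ := by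
  ext ⟨i1, i2⟩ ⟨j1, j2⟩
  simp [conjTranspose_apply, kroneckerMap_apply]

lemma ptraceB_herm (hρ : ρᴴ = ρ) : (ptraceB ρ)ᴴ = ptraceB ρ := by
  ext i j
  simp only [conjTranspose_apply, ptraceB, star_sum]
  refine Finset.sum_congr rfl fun k _ => ?_
  have := congrFun (congrFun hρ (i, k)) (j, k)
  simpa [conjTranspose_apply] using this

lemma ptraceA_herm (hρ : ρᴴ = ρ) : (ptraceA ρ)ᴴ = ptraceA ρ := by
  ext i j
  simp only [conjTranspose_apply, ptraceA, star_sum]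
  refine Finset.sum_congr rfl fun k _ => ?_
  have := congrFun (congrFun hρ (k, i)) (k, j)
  simpa [conjTranspose_apply] using this

lemma re_trace_sq_nonneg {n : Type*} [Fintype n] (X : Matrix n n ℂ) (hX : Xᴴ = X) :
    0 ≤ ((X * X).trace).re := by
  have h1 : X * X = X * Xᴴ := by rw [hX]
  have h2 : (X * Xᴴ).trace = ((∑ i, ∑ j, Complex.normSq (X i j) : ℝ) : ℂ) := by
    push_cast
    simp [Matrix.trace, Matrix.diag, Matrix.mul_apply, conjTranspose_apply, Complex.mul_conj]
  rw [h1, h2, Complex.ofReal_re]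
  exact Finset.sum_nonneg fun i _ => Finset.sum_nonneg fun j _ => Complex.normSq_nonneg _

end aux

theorem inhomogeneous_subadditivity (dA dB : ℕ) (hA : 2 ≤ dA) (hB : 2 ≤ dB)
    (ρ : Matrix (Fin dA × Fin dB) (Fin dA × Fin dB) ℂ)
    (hρ : ρ.PosSemidef) (hρtr : ρ.trace = 1) :
    linEntropy ρ ≤ (1 / dB) * linEntropy (ptraceB ρ) + (1 / dA) * linEntropy (ptraceA ρ) +
      ((dA : ℝ) - 1) * ((dB : ℝ) - 1) / (dA * dB) := by
  have hA0 : (0:ℝ) < dA := by exact_mod_cast Nat.lt_of_lt_of_le two_pos hA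
  have hB0 : (0:ℝ) < dB := by exact_mod_cast Nat.lt_of_lt_of_le two_pos hB
  have hAc : (dA:ℂ) ≠ 0 := by exact_mod_cast hA0.ne'
  have hBc : (dB:ℂ) ≠ 0 := by exact_mod_cast hB0.ne'
  set P := ptraceB ρ with hP
  set Q := ptraceA ρ with hQ
  set KP := P ⊗ₖ (1 : Matrix (Fin dB) (Fin dB) ℂ) with hKP
  set KQ := (1 : Matrix (Fin dA) (Fin dA) ℂ) ⊗ₖ Q with hKQ
  set X := ρ - (dB:ℂ)⁻¹ • KP - (dA:ℂ)⁻¹ • KQ + ((dA:ℂ) * (dB:ℂ))⁻¹ • 1 with hX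
  -- basic traces
  have htrP : P.trace = 1 := by rw [hP, trace_ptraceB, hρtr]
  have htrQ : Q.trace = 1 := by rw [hQ, trace_ptraceA, hρtr]
  have htr1A : (1 : Matrix (Fin dA) (Fin dA) ℂ).trace = (dA:ℂ) := by simp [Matrix.trace_one]
  have htr1B : (1 : Matrix (Fin dB) (Fin dB) ℂ).trace = (dB:ℂ) := by simp [Matrix.trace_one]
  have htr1 : (1 : Matrix (Fin dA × Fin dB) (Fin dA × Fin dB) ℂ).trace = (dA:ℂ) * (dB:ℂ) := by
    simp [Matrix.trace_one]
  have tP : (ρ * KP).trace = (P * P).trace := trace_mul_kron_one ρ P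
  have tQ : (ρ * KQ).trace = (Q * Q).trace := trace_one_kron_mul ρ Q
  have tKPKP : (KP * KP).trace = (dB:ℂ) * (P * P).trace := by
    rw [hKP, ← Matrix.mul_kronecker_mul, Matrix.trace_kronecker, Matrix.one_mul, htr1B]
    ring
  have tKQKQ : (KQ * KQ).trace = (dA:ℂ) * (Q * Q).trace := by
    rw [hKQ, ← Matrix.mul_kronecker_mul, Matrix.trace_kronecker, Matrix.one_mul, htr1A]
  have tKPKQ : (KP * KQ).trace = 1 := by
    rw [hKP, hKQ, ← Matrix.mul_kronecker_mul, Matrix.trace_kronecker, Matrix.mul_one,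
      Matrix.one_mul, htrP, htrQ]
    ring
  have tKQKP : (KQ * KP).trace = 1 := by rw [Matrix.trace_mul_comm]; exact tKPKQ
  have tKP : KP.trace = (dB:ℂ) := by
    rw [hKP, Matrix.trace_kronecker, htrP, htr1B, one_mul]
  have tKQ : KQ.trace = (dA:ℂ) := by
    rw [hKQ, Matrix.trace_kronecker, htrQ, htr1A, mul_one]
  have tPρ : (KP * ρ).trace = (P * P).trace := by rw [Matrix.trace_mul_comm]; exact tP
  have tQρ : (KQ * ρ).trace = (Q * Q).trace := by rw [Matrix.trace_mul_comm]; exact tQ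
  -- hermitian
  have hXh : Xᴴ = X := by
    rw [hX]
    simp only [conjTranspose_add, conjTranspose_sub, conjTranspose_smul,
      conjTranspose_one, hKP, hKQ, kron_conjTranspose, conjTranspose_one,
      ptraceB_herm ρ hρ.1, ptraceA_herm ρ hρ.1, ← hP, ← hQ, hρ.1]
    simp [star_inv₀, star_mul']
    have h1 : Pᴴ = P := ptraceB_herm ρ hρ.1
    have h2 : Qᴴ = Q := ptraceA_herm ρ hρ.1
    rw [h1, h2, hρ.1.eq]
  -- key trace identity
  have key : ((X * X).trace) =
      (ρ * ρ).trace - (dB:ℂ)⁻¹ * (P * P).trace - (dA:ℂ)⁻¹ * (Q * Q).trace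
        + ((dA:ℂ) * (dB:ℂ))⁻¹ := by
    rw [hX]
    simp only [Matrix.mul_sub, Matrix.sub_mul, Matrix.mul_add, Matrix.add_mul,
      Matrix.smul_mul, Matrix.mul_smul, Matrix.mul_one, Matrix.one_mul,
      Matrix.trace_sub, Matrix.trace_add, Matrix.trace_smul, smul_eq_mul, smul_smul]
    rw [tP, tQ, tKPKP, tKQKQ, tKPKQ, tKQKP, tKP, tKQ, tPρ, tQρ, htr1, hρtr]
    field_simp
    ring
  have hpos : 0 ≤ ((X * X).trace).re := re_trace_sq_nonneg X hXh
  rw [key] at hpos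
  set a := ((ρ * ρ).trace).re
  set b := ((P * P).trace).re
  set c := ((Q * Q).trace).re
  have hre : ((ρ * ρ).trace - (dB:ℂ)⁻¹ * (P * P).trace - (dA:ℂ)⁻¹ * (Q * Q).trace
        + ((dA:ℂ) * (dB:ℂ))⁻¹).re
      = a - (dB:ℝ)⁻¹ * b - (dA:ℝ)⁻¹ * c + ((dA:ℝ) * (dB:ℝ))⁻¹ := by
    have e1 : ((dB:ℂ))⁻¹ = (((dB:ℝ)⁻¹ : ℝ) : ℂ) := by push_cast; ring
    have e2 : ((dA:ℂ))⁻¹ = (((dA:ℝ)⁻¹ : ℝ) : ℂ) := by push_cast; ring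
    have e3 : ((dA:ℂ) * (dB:ℂ))⁻¹ = ((((dA:ℝ) * (dB:ℝ))⁻¹ : ℝ) : ℂ) := by push_cast; ring
    rw [e1, e2, e3]
    simp [Complex.sub_re, Complex.add_re, Complex.ofReal_re, Complex.re_ofReal_mul]
    rfl
  rw [hre] at hpos
  simp only [linEntropy, ← hP, ← hQ]
  have heq : (1 / (dB:ℝ)) * (1 - b) + (1 / (dA:ℝ)) * (1 - c)
      + ((dA:ℝ) - 1) * ((dB:ℝ) - 1) / ((dA:ℝ) * (dB:ℝ))
      = (1 - a) + (a - (dB:ℝ)⁻¹ * b - (dA:ℝ)⁻¹ * c + ((dA:ℝ) * (dB:ℝ))⁻¹) := by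
    field_simp
    ring
  rw [heq]
  linarith
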